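/- Most resolvents are super-regular: there exists a sequence (O_q) of subsets of the set J(X) of firmly nonexpansive maps on X, each ρ̂-open in J(X) and ρ̂-dense in J(X), such that every T ∈ ⋂_q O_q is super-regular. -/

import Mathlib

open RealInnerProductSpace Filter

variable {X : Type*} [NormedAddCommGroup X] [InnerProductSpace ℝ X] [CompleteSpace X]

/-- `T` is nonexpansive. -/
def Nonexpansive (T : X → X) : Prop := ∀ x y : X, ‖T x - T y‖ ≤ ‖x - y‖

/-- `T` is firmly nonexpansive. -/
def FirmlyNonexpansive (T : X → X) : Prop :=
  ∀ x y : X, ‖T x - T y‖ ^ 2 ≤ ⟪x - y, T x - T y⟫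

/-- `‖T₁ - T₂‖ₙ = sup_{‖x‖ ≤ n} ‖T₁ x - T₂ x‖`. -/
noncomputable def ballSup (T₁ T₂ : X → X) (n : ℕ) : ℝ :=
  sSup {r : ℝ | ∃ x : X, ‖x‖ ≤ (n : ℝ) ∧ r = ‖T₁ x - T₂ x‖}

/-- The metric `ρ` on nonexpansive maps. -/
noncomputable def rho (T₁ T₂ : X → X) : ℝ :=
  ∑' n : ℕ, (1 / 2 ^ (n + 1)) *
    (ballSup T₁ T₂ (n + 1) / (1 + ballSup T₁ T₂ (n + 1)))

/-- The metric `ρ̂` on firmly nonexpansive maps: `ρ̂(T₁,T₂) = ρ(2T₁ - Id, 2T₂ - Id)`. -/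
noncomputable def rhoHat (T₁ T₂ : X → X) : ℝ :=
  rho (fun x => (2 : ℝ) • T₁ x - x) (fun x => (2 : ℝ) • T₂ x - x)

/-- `T` is super-regular with limit point `xT`. -/
def SuperRegularAt (T : X → X) (xT : X) : Prop :=
  ∀ s : ℝ, 0 < s → ∀ ε : ℝ, 0 < ε → ∃ N : ℕ, ∀ n ≥ N, ∀ x : X, ‖x‖ ≤ s → ‖T^[n] x - xT‖ < ε

/-- `T` is super-regular. -/
def SuperRegular (T : X → X) : Prop := ∃ xT : X, SuperRegularAt T xT

/-- `T` is a (Banach) contraction. -/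
def Contraction (T : X → X) : Prop :=
  ∃ l : ℝ, 0 ≤ l ∧ l < 1 ∧ ∀ x y : X, ‖T x - T y‖ ≤ l * ‖x - y‖

set_option linter.unusedSectionVars false
open Topology

section Aux

lemma fne_nonexp {T : X → X} (h : FirmlyNonexpansive T) : Nonexpansive T := by
  intro x y
  have h1 := h x y
  have h2 : ⟪x - y, T x - T y⟫ ≤ ‖x - y‖ * ‖T x - T y‖ := real_inner_le_norm _ _
  rcases eq_or_lt_of_le (norm_nonneg (T x - T y)) with h0 | h0
  · rw [← h0]; exact norm_nonneg _
  · have := h1.trans h2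
    rw [pow_two] at this
    exact le_of_mul_le_mul_right (by linarith [this]) h0

lemma fne_dbl_nonexp {T : X → X} (h : FirmlyNonexpansive T) :
    Nonexpansive (fun x => (2 : ℝ) • T x - x) := by
  intro x y
  simp only
  have key : ((2:ℝ) • T x - x) - ((2:ℝ) • T y - y) = (2:ℝ) • (T x - T y) - (x - y) := by
    module
  rw [key]
  have h1 := h x y
  have expand : ‖(2:ℝ) • (T x - T y) - (x - y)‖ ^ 2
      = 4 * ‖T x - T y‖ ^ 2 - 4 * ⟪x - y, T x - T y⟫ + ‖x - y‖ ^ 2 := by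
    rw [norm_sub_sq_real]
    rw [norm_smul, real_inner_smul_left]
    simp [Real.norm_eq_abs]
    rw [real_inner_comm]
    ring
  nlinarith [norm_nonneg ((2:ℝ) • (T x - T y) - (x - y)), norm_nonneg (x - y),
    sq_nonneg (‖(2:ℝ) • (T x - T y) - (x - y)‖ - ‖x - y‖), expand]

lemma ballSup_set_nonempty (T₁ T₂ : X → X) (n : ℕ) :
    {r : ℝ | ∃ x : X, ‖x‖ ≤ (n : ℝ) ∧ r = ‖T₁ x - T₂ x‖}.Nonempty :=
  ⟨‖T₁ 0 - T₂ 0‖, 0, by simp, rfl⟩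

lemma ballSup_set_bdd {T₁ T₂ : X → X} (h₁ : Nonexpansive T₁) (h₂ : Nonexpansive T₂) (n : ℕ) :
    BddAbove {r : ℝ | ∃ x : X, ‖x‖ ≤ (n : ℝ) ∧ r = ‖T₁ x - T₂ x‖} := by
  refine ⟨2 * n + ‖T₁ 0 - T₂ 0‖, ?_⟩
  rintro r ⟨x, hx, rfl⟩
  have e1 : T₁ x - T₂ x = (T₁ x - T₁ 0) + (T₁ 0 - T₂ 0) + (T₂ 0 - T₂ x) := by abel
  calc ‖T₁ x - T₂ x‖ ≤ ‖T₁ x - T₁ 0‖ + ‖T₁ 0 - T₂ 0‖ + ‖T₂ 0 - T₂ x‖ := by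
        rw [e1]; exact norm_add₃_le
    _ ≤ ‖x - 0‖ + ‖T₁ 0 - T₂ 0‖ + ‖0 - x‖ := by
        gcongr; exacts [h₁ x 0, h₂ 0 x]
    _ ≤ 2 * n + ‖T₁ 0 - T₂ 0‖ := by
        simp only [sub_zero, zero_sub, norm_neg]; linarith

lemma le_ballSup {T₁ T₂ : X → X} (h₁ : Nonexpansive T₁) (h₂ : Nonexpansive T₂) (n : ℕ)
    {x : X} (hx : ‖x‖ ≤ (n : ℝ)) : ‖T₁ x - T₂ x‖ ≤ ballSup T₁ T₂ n :=
  le_csSup (ballSup_set_bdd h₁ h₂ n) ⟨x, hx, rfl⟩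

lemma ballSup_nonneg {T₁ T₂ : X → X} (h₁ : Nonexpansive T₁) (h₂ : Nonexpansive T₂) (n : ℕ) :
    0 ≤ ballSup T₁ T₂ n :=
  (norm_nonneg _).trans (le_ballSup h₁ h₂ n (x := 0) (by simp))

lemma ballSup_le {T₁ T₂ : X → X} (n : ℕ) {c : ℝ}
    (h : ∀ x : X, ‖x‖ ≤ (n : ℝ) → ‖T₁ x - T₂ x‖ ≤ c) : ballSup T₁ T₂ n ≤ c := by
  apply csSup_le (ballSup_set_nonempty T₁ T₂ n)
  rintro r ⟨x, hx, rfl⟩; exact h x hx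

lemma rho_term_nonneg {T₁ T₂ : X → X} (h₁ : Nonexpansive T₁) (h₂ : Nonexpansive T₂) (n : ℕ) :
    0 ≤ (1 / 2 ^ (n + 1) : ℝ) * (ballSup T₁ T₂ (n + 1) / (1 + ballSup T₁ T₂ (n + 1))) := by
  have hb := ballSup_nonneg h₁ h₂ (n + 1)
  positivity

lemma rho_summable {T₁ T₂ : X → X} (h₁ : Nonexpansive T₁) (h₂ : Nonexpansive T₂) :
    Summable (fun n : ℕ => (1 / 2 ^ (n + 1) : ℝ) *
      (ballSup T₁ T₂ (n + 1) / (1 + ballSup T₁ T₂ (n + 1)))) := by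
  have hg : Summable (fun n : ℕ => (1/2 : ℝ) ^ (n + 1)) :=
    (summable_nat_add_iff 1).2 (summable_geometric_of_lt_one (by norm_num) (by norm_num))
  have hle : ∀ n : ℕ, (1 / 2 ^ (n + 1) : ℝ) *
      (ballSup T₁ T₂ (n + 1) / (1 + ballSup T₁ T₂ (n + 1))) ≤ (1/2 : ℝ) ^ (n + 1) := by
    intro n
    have hb := ballSup_nonneg h₁ h₂ (n + 1)
    have h2 : ballSup T₁ T₂ (n + 1) / (1 + ballSup T₁ T₂ (n + 1)) ≤ 1 := by
      rw [div_le_one (by linarith)]; linarith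
    have h3 : (1 / 2 ^ (n + 1) : ℝ) * (ballSup T₁ T₂ (n + 1) / (1 + ballSup T₁ T₂ (n + 1)))
        ≤ (1 / 2 ^ (n + 1) : ℝ) * 1 := mul_le_mul_of_nonneg_left h2 (by positivity)
    calc (1 / 2 ^ (n + 1) : ℝ) * (ballSup T₁ T₂ (n + 1) / (1 + ballSup T₁ T₂ (n + 1)))
        ≤ (1 / 2 ^ (n + 1) : ℝ) * 1 := h3
      _ = (1/2 : ℝ) ^ (n + 1) := by rw [mul_one, div_pow]; norm_num
  exact Summable.of_nonneg_of_le (rho_term_nonneg h₁ h₂) hle hg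

lemma div_one_add_mono {a b : ℝ} (ha : 0 ≤ a) (hab : a ≤ b) : a / (1 + a) ≤ b / (1 + b) := by
  rw [div_le_div_iff₀ (by linarith) (by linarith)]
  nlinarith

lemma close_of_rhoHat_lt {S T : X → X} (hS : FirmlyNonexpansive S) (hT : FirmlyNonexpansive T)
    (m : ℕ) {η : ℝ} (hη : 0 < η)
    (h : rhoHat S T < 1 / 2 ^ (m + 1) * (2 * η / (1 + 2 * η))) :
    ∀ x : X, ‖x‖ ≤ (m : ℝ) + 1 → ‖S x - T x‖ < η := by
  have hU := fne_dbl_nonexp hS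
  have hV := fne_dbl_nonexp hT
  set U : X → X := fun x => (2 : ℝ) • S x - x with hUdef
  set V : X → X := fun x => (2 : ℝ) • T x - x with hVdef
  set b := ballSup U V (m + 1) with hbdef
  have hb0 : 0 ≤ b := ballSup_nonneg hU hV (m + 1)
  have hterm : (1 / 2 ^ (m + 1) : ℝ) * (b / (1 + b)) ≤ rhoHat S T := by
    exact Summable.le_tsum (rho_summable hU hV) m (fun j _ => rho_term_nonneg hU hV j)
  have hlt : (1 / 2 ^ (m + 1) : ℝ) * (b / (1 + b))
      < 1 / 2 ^ (m + 1) * (2 * η / (1 + 2 * η)) := lt_of_le_of_lt hterm h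
  have hfrac : b / (1 + b) < 2 * η / (1 + 2 * η) :=
    lt_of_mul_lt_mul_left hlt (by positivity)
  have hb : b < 2 * η := by
    by_contra hc
    push_neg at hc
    exact absurd (div_one_add_mono (by linarith) hc) (not_le.2 hfrac)
  intro x hx
  have hmem : ‖U x - V x‖ ≤ b := by
    apply le_ballSup hU hV (m + 1)
    push_cast
    exact hx
  have heq : U x - V x = (2 : ℝ) • (S x - T x) := by
    simp only [hUdef, hVdef]; module
  rw [heq, norm_smul] at hmem
  simp only [Real.norm_ofNat] at hmem
  linarith

lemma tsum_shifted_geom : ∑' n : ℕ, ((n : ℝ) + 1) * (1/2) ^ (n + 1) = 2 := by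
  have hs : Summable (fun n : ℕ => (n : ℝ) * (1/2) ^ n) := by
    have := summable_pow_mul_geometric_of_norm_lt_one (R := ℝ) 1 (r := 1/2) (by norm_num)
    simpa using this
  have ht : ∑' n : ℕ, (n : ℝ) * (1/2) ^ n = (1/2) / (1 - 1/2) ^ 2 :=
    tsum_coe_mul_geometric_of_norm_lt_one (by norm_num)
  have hz := Summable.tsum_eq_zero_add hs
  simp only [Nat.cast_zero, zero_mul, pow_zero, zero_add, Nat.cast_add, Nat.cast_one] at hz
  rw [hz] at ht
  rw [ht]
  norm_num

lemma rhoHat_le_of_pointwise {S T : X → X} (hS : FirmlyNonexpansive S)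
    (hT : FirmlyNonexpansive T) {a c : ℝ} (ha : 0 ≤ a) (hc : 0 ≤ c)
    (h : ∀ x : X, ‖S x - T x‖ ≤ a * (‖x‖ + c)) :
    rhoHat S T ≤ 2 * a * (2 + c) := by
  have hU := fne_dbl_nonexp hS
  have hV := fne_dbl_nonexp hT
  set U : X → X := fun x => (2 : ℝ) • S x - x
  set V : X → X := fun x => (2 : ℝ) • T x - x
  -- termwise bound
  have hterm : ∀ n : ℕ, (1 / 2 ^ (n + 1) : ℝ) *
      (ballSup U V (n + 1) / (1 + ballSup U V (n + 1)))
      ≤ 2 * a * (((n : ℝ) + 1) * (1/2) ^ (n + 1)) + (2 * a * c) * (1/2) ^ (n + 1) := by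
    intro n
    have hb0 : 0 ≤ ballSup U V (n + 1) := ballSup_nonneg hU hV (n + 1)
    have hbb : ballSup U V (n + 1) ≤ 2 * a * (((n : ℝ) + 1) + c) := by
      apply ballSup_le
      intro x hx
      have heq : U x - V x = (2 : ℝ) • (S x - T x) := by simp only [U, V]; module
      rw [heq, norm_smul]
      simp only [Real.norm_ofNat]
      have := h x
      have hxn : ‖x‖ ≤ (n : ℝ) + 1 := by push_cast at hx; linarith
      calc 2 * ‖S x - T x‖ ≤ 2 * (a * (‖x‖ + c)) := by linarith
        _ ≤ 2 * (a * (((n : ℝ) + 1) + c)) := by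
            have : a * (‖x‖ + c) ≤ a * (((n : ℝ) + 1) + c) := by
              apply mul_le_mul_of_nonneg_left _ ha; linarith
            linarith
        _ = 2 * a * (((n : ℝ) + 1) + c) := by ring
    have hfr : ballSup U V (n + 1) / (1 + ballSup U V (n + 1)) ≤ ballSup U V (n + 1) := by
      rw [div_le_iff₀ (by linarith)]
      nlinarith
    calc (1 / 2 ^ (n + 1) : ℝ) * (ballSup U V (n + 1) / (1 + ballSup U V (n + 1)))
        ≤ (1 / 2 ^ (n + 1) : ℝ) * (2 * a * (((n : ℝ) + 1) + c)) := by
          apply mul_le_mul_of_nonneg_left _ (by positivity)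
          exact hfr.trans hbb
      _ = 2 * a * (((n : ℝ) + 1) * (1/2) ^ (n + 1)) + (2 * a * c) * (1/2) ^ (n + 1) := by
          rw [div_pow]; ring_nf
  -- summabilities
  have hs1 : Summable (fun n : ℕ => ((n : ℝ) + 1) * (1/2) ^ (n + 1)) := by
    have hs : Summable (fun n : ℕ => (n : ℝ) * (1/2) ^ n) := by
      have := summable_pow_mul_geometric_of_norm_lt_one (R := ℝ) 1 (r := 1/2) (by norm_num)
      simpa using this
    have := (summable_nat_add_iff 1).2 hs
    simpa using this
  have hs2 : Summable (fun n : ℕ => ((1:ℝ)/2) ^ (n + 1)) :=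
    (summable_nat_add_iff 1).2 (summable_geometric_of_lt_one (by norm_num) (by norm_num))
  have hsg : Summable (fun n : ℕ => 2 * a * (((n : ℝ) + 1) * (1/2) ^ (n + 1))
      + (2 * a * c) * (1/2) ^ (n + 1)) :=
    (hs1.mul_left _).add (hs2.mul_left _)
  have hgeo : Summable (fun n : ℕ => ((1:ℝ)/2) ^ n) :=
    summable_geometric_of_lt_one (by norm_num) (by norm_num)
  have hts2 : ∑' n : ℕ, ((1:ℝ)/2) ^ (n + 1) = 1 := by
    have ht : ∑' n : ℕ, ((1:ℝ)/2) ^ n = (1 - 1/2)⁻¹ :=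
      tsum_geometric_of_lt_one (by norm_num) (by norm_num)
    have hz := Summable.tsum_eq_zero_add hgeo
    rw [ht] at hz
    norm_num at hz
    linarith
  have hmain : rhoHat S T ≤ ∑' n : ℕ, (2 * a * (((n : ℝ) + 1) * (1/2) ^ (n + 1))
      + (2 * a * c) * (1/2) ^ (n + 1)) := by
    exact Summable.tsum_le_tsum hterm (rho_summable hU hV) hsg
  have hcomp : ∑' n : ℕ, (2 * a * (((n : ℝ) + 1) * (1/2) ^ (n + 1))
      + (2 * a * c) * (1/2) ^ (n + 1)) = 2 * a * (2 + c) := by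
    rw [Summable.tsum_add (hs1.mul_left _) (hs2.mul_left _), tsum_mul_left, tsum_mul_left,
      tsum_shifted_geom, hts2]
    ring
  calc rhoHat S T ≤ _ := hmain
    _ = 2 * a * (2 + c) := hcomp

lemma nonexp_iter {S : X → X} (hS : Nonexpansive S) :
    ∀ n : ℕ, ∀ x y : X, ‖S^[n] x - S^[n] y‖ ≤ ‖x - y‖ := by
  intro n
  induction n with
  | zero => intro x y; simp
  | succ k ih =>
    intro x y
    rw [Function.iterate_succ_apply', Function.iterate_succ_apply']
    exact (hS _ _).trans (ih x y)

lemma contraction_iter {S : X → X} {l : ℝ} (hl : 0 ≤ l)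
    (hS : ∀ x y : X, ‖S x - S y‖ ≤ l * ‖x - y‖) :
    ∀ n : ℕ, ∀ x y : X, ‖S^[n] x - S^[n] y‖ ≤ l ^ n * ‖x - y‖ := by
  intro n
  induction n with
  | zero => intro x y; simp
  | succ k ih =>
    intro x y
    rw [Function.iterate_succ_apply', Function.iterate_succ_apply']
    calc ‖S (S^[k] x) - S (S^[k] y)‖ ≤ l * ‖S^[k] x - S^[k] y‖ := hS _ _
      _ ≤ l * (l ^ k * ‖x - y‖) := mul_le_mul_of_nonneg_left (ih x y) hl
      _ = l ^ (k + 1) * ‖x - y‖ := by ring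

lemma iter_perturb {S S' : X → X} (hS : Nonexpansive S)
    {M δ : ℝ} (hδ : 0 ≤ δ)
    (hclose : ∀ y : X, ‖y‖ ≤ M → ‖S' y - S y‖ ≤ δ) (K : ℕ) (x : X)
    (hx : ∀ k : ℕ, k ≤ K → ‖S^[k] x‖ + K * δ ≤ M) :
    ∀ k : ℕ, k ≤ K → ‖S'^[k] x - S^[k] x‖ ≤ k * δ := by
  intro k
  induction k with
  | zero => intro _; simp
  | succ j ih =>
    intro hjK
    have ihj := ih (by omega)
    have hball : ‖S'^[j] x‖ ≤ M := by
      have h1 : ‖S'^[j] x‖ ≤ ‖S^[j] x‖ + j * δ := by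
        calc ‖S'^[j] x‖ ≤ ‖S^[j] x‖ + ‖S'^[j] x - S^[j] x‖ := by
              have := norm_add_le (S^[j] x) (S'^[j] x - S^[j] x)
              simpa using this
          _ ≤ ‖S^[j] x‖ + j * δ := by linarith
      have h2 := hx j (by omega)
      have h3 : (j : ℝ) * δ ≤ K * δ := by
        apply mul_le_mul_of_nonneg_right _ hδ
        exact_mod_cast Nat.le_of_lt_succ (Nat.lt_succ_of_le (by omega))
      linarith
    rw [Function.iterate_succ_apply', Function.iterate_succ_apply']
    have e : S' (S'^[j] x) - S (S^[j] x)
        = (S' (S'^[j] x) - S (S'^[j] x)) + (S (S'^[j] x) - S (S^[j] x)) := by abel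
    calc ‖S' (S'^[j] x) - S (S^[j] x)‖
        ≤ ‖S' (S'^[j] x) - S (S'^[j] x)‖ + ‖S (S'^[j] x) - S (S^[j] x)‖ := by
          rw [e]; exact norm_add_le _ _
      _ ≤ δ + ‖S'^[j] x - S^[j] x‖ := by
          gcongr
          · exact hclose _ hball
          · exact hS _ _
      _ ≤ δ + j * δ := by linarith
      _ = ((j : ℝ) + 1) * δ := by ring
      _ = ((j + 1 : ℕ) : ℝ) * δ := by push_cast; ring

lemma improve {S : X → X} (hS : Nonexpansive S) {z : X} {θ s : ℝ} {N : ℕ}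
    (hθ1 : θ ≤ 1) (hs : ‖z‖ + 1 ≤ s) (hN : 1 ≤ N)
    (hwin : ∀ n : ℕ, N ≤ n → n ≤ 2 * N → ∀ x : X, ‖x‖ ≤ s → ‖S^[n] x - z‖ ≤ θ) :
    ∀ n : ℕ, N ≤ n → ∀ x : X, ‖x‖ ≤ s → ‖S^[n] x - z‖ ≤ θ := by
  intro n
  induction n using Nat.strong_induction_on with
  | _ n ih =>
    intro hNn x hx
    by_cases h2 : n ≤ 2 * N
    · exact hwin n hNn h2 x hx
    · push_neg at h2
      have hsplit : n = N + (n - N) := by omega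
      have hrec : ‖S^[n - N] x - z‖ ≤ θ := ih (n - N) (by omega) (by omega) x hx
      have hy : ‖S^[n - N] x‖ ≤ s := by
        calc ‖S^[n - N] x‖ ≤ ‖S^[n - N] x - z‖ + ‖z‖ := by
              have := norm_add_le (S^[n - N] x - z) z; simpa using this
          _ ≤ θ + ‖z‖ := by linarith
          _ ≤ s := by linarith
      rw [hsplit, Function.iterate_add_apply]
      exact hwin N le_rfl (by omega) _ hy

lemma fne_smul {T : X → X} (hT : FirmlyNonexpansive T) {l : ℝ} (h0 : 0 ≤ l) (h1 : l ≤ 1) :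
    FirmlyNonexpansive (fun x => l • T x) := by
  intro x y
  simp only
  have h := hT x y
  have hinner : (0:ℝ) ≤ ⟪x - y, T x - T y⟫ := le_trans (by positivity) h
  have e : l • T x - l • T y = l • (T x - T y) := by module
  rw [e, norm_smul, real_inner_smul_right]
  rw [Real.norm_eq_abs, abs_of_nonneg h0]
  have : (l * ‖T x - T y‖) ^ 2 = l ^ 2 * ‖T x - T y‖ ^ 2 := by ring
  rw [this]
  have hl2 : l ^ 2 ≤ l := by nlinarith
  calc l ^ 2 * ‖T x - T y‖ ^ 2 ≤ l ^ 2 * ⟪x - y, T x - T y⟫ :=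
        mul_le_mul_of_nonneg_left h (sq_nonneg l)
    _ ≤ l * ⟪x - y, T x - T y⟫ := mul_le_mul_of_nonneg_right hl2 hinner

lemma exists_fixedPt {T : X → X} {l : ℝ} (h0 : 0 ≤ l) (h1 : l < 1)
    (hT : ∀ x y : X, ‖T x - T y‖ ≤ l * ‖x - y‖) : ∃ z : X, T z = z := by
  have : Nonempty X := ⟨0⟩
  have hlip : LipschitzWith ⟨l, h0⟩ T := by
    apply LipschitzWith.of_dist_le_mul
    intro x y
    rw [dist_eq_norm, dist_eq_norm]
    exact hT x y
  have hcontr : ContractingWith ⟨l, h0⟩ T := ⟨by exact_mod_cast h1, hlip⟩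
  exact ⟨hcontr.fixedPoint T, hcontr.fixedPoint_isFixedPt⟩

end Aux

set_option maxHeartbeats 2000000

/-- most firmly nonexpansive maps (resolvents) are super-regular. -/
theorem generic_superRegular_resolvent :
    ∃ O : ℕ → Set (X → X),
      (∀ q, O q ⊆ {T : X → X | FirmlyNonexpansive T}) ∧
      (∀ q, ∀ T ∈ O q, ∃ r > (0 : ℝ), ∀ S : X → X, FirmlyNonexpansive S → rhoHat S T < r → S ∈ O q) ∧
      (∀ q, ∀ T : X → X, FirmlyNonexpansive T → ∀ ε : ℝ, 0 < ε → ∃ S ∈ O q, rhoHat S T < ε) ∧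
      (∀ T ∈ ⋂ q, O q, SuperRegular T) := by
  classical
  set O : ℕ → Set (X → X) := fun q =>
    {S | FirmlyNonexpansive S ∧ ∃ (z : X) (N : ℕ) (θ : ℝ), 1 ≤ N ∧ 0 ≤ θ ∧
      θ < 1 / ((q : ℝ) + 1) ∧ ∀ n : ℕ, N ≤ n → n ≤ 2 * N →
        ∀ x : X, ‖x‖ ≤ ‖z‖ + (q : ℝ) + 1 → ‖S^[n] x - z‖ ≤ θ} with hO
  refine ⟨O, ?_, ?_, ?_, ?_⟩
  · intro q S hS
    exact hS.1
  · -- openness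
    intro q T hT
    obtain ⟨hFT, z, N, θ, hN, hθ0, hθlt, hwin⟩ := hT
    set s : ℝ := ‖z‖ + (q : ℝ) + 1 with hsdef
    have hs0 : 0 < s := by positivity
    set θ'' : ℝ := (θ + 1 / ((q : ℝ) + 1)) / 2 with hθ''def
    have hθθ'' : θ < θ'' := by
      rw [hθ''def]; linarith
    have hθ''lt : θ'' < 1 / ((q : ℝ) + 1) := by
      rw [hθ''def]; linarith
    have hθ''0 : 0 ≤ θ'' := by linarith
    set C : ℝ := (Finset.range (2 * N + 1)).sup' Finset.nonempty_range_add_one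
      (fun k => ‖T^[k] (0 : X)‖) with hCdef
    have hC : ∀ k : ℕ, k ≤ 2 * N → ‖T^[k] (0 : X)‖ ≤ C := by
      intro k hk
      exact Finset.le_sup' (fun k => ‖T^[k] (0 : X)‖) (Finset.mem_range.mpr (by omega))
    have hC0 : 0 ≤ C := (norm_nonneg _).trans (hC 0 (by omega))
    set η : ℝ := min 1 ((θ'' - θ) / (2 * (N : ℝ) + 1)) with hηdef
    have hη : 0 < η := lt_min one_pos (div_pos (by linarith) (by positivity))
    have hη1 : η ≤ 1 := min_le_left _ _
    have hη2 : (2 * (N : ℝ) + 1) * η ≤ θ'' - θ := by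
      have h1 : η ≤ (θ'' - θ) / (2 * (N : ℝ) + 1) := min_le_right _ _
      have h2 : (0:ℝ) < 2 * (N : ℝ) + 1 := by positivity
      rw [le_div_iff₀ h2] at h1
      linarith
    set m : ℕ := ⌈s + C + 2 * N⌉₊ with hmdef
    have hm : s + C + 2 * (N : ℝ) ≤ (m : ℝ) := Nat.le_ceil _
    refine ⟨1 / 2 ^ (m + 1) * (2 * η / (1 + 2 * η)), by positivity, ?_⟩
    intro S hFS hρ
    have hclose : ∀ y : X, ‖y‖ ≤ (m : ℝ) + 1 → ‖S y - T y‖ ≤ η :=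
      fun y hy => (close_of_rhoHat_lt hFS hFT m hη hρ y hy).le
    refine ⟨hFS, z, N, θ'', hN, hθ''0, hθ''lt, ?_⟩
    intro n hNn hn2N x hx
    have hxs : ‖x‖ ≤ s := hx
    have hpert : ∀ k : ℕ, k ≤ 2 * N → ‖S^[k] x - T^[k] x‖ ≤ (k : ℝ) * η := by
      apply iter_perturb (fne_nonexp hFT) hη.le hclose (2 * N) x
      intro k hk
      have h1 : ‖T^[k] x‖ ≤ ‖x‖ + ‖T^[k] (0 : X)‖ := by
        have h2 := nonexp_iter (fne_nonexp hFT) k x 0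
        calc ‖T^[k] x‖ ≤ ‖T^[k] x - T^[k] 0‖ + ‖T^[k] (0:X)‖ := by
              have := norm_add_le (T^[k] x - T^[k] 0) (T^[k] (0:X)); simpa using this
          _ ≤ ‖x‖ + ‖T^[k] (0:X)‖ := add_le_add (le_trans h2 (by simp)) le_rfl
      have h3 : (2 * N : ℕ) * η ≤ 2 * (N : ℝ) := by
        push_cast
        nlinarith
      have h4 : ‖T^[k] (0:X)‖ ≤ C := hC k hk
      push_cast
      push_cast at h3
      linarith
    have h5 := hpert n (by omega)
    have h6 : (n : ℝ) * η ≤ θ'' - θ := by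
      have : (n : ℝ) ≤ 2 * (N : ℝ) + 1 := by
        have : (n : ℕ) ≤ 2 * N := hn2N
        push_cast
        exact_mod_cast le_trans this (by omega)
      nlinarith
    have h7 : ‖T^[n] x - z‖ ≤ θ := hwin n hNn hn2N x hx
    calc ‖S^[n] x - z‖ ≤ ‖S^[n] x - T^[n] x‖ + ‖T^[n] x - z‖ := by
          have e : S^[n] x - z = (S^[n] x - T^[n] x) + (T^[n] x - z) := by abel
          rw [e]; exact norm_add_le _ _
      _ ≤ (θ'' - θ) + θ := by linarith
      _ = θ'' := by ring
  · -- density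
    intro q T hFT ε hε
    set c : ℝ := ‖T (0 : X)‖ with hcdef
    have hc0 : 0 ≤ c := norm_nonneg _
    set γ : ℝ := min (1/2) (ε / (4 * (2 + c))) with hγdef
    have hγ0 : 0 < γ := lt_min (by norm_num) (by positivity)
    have hγhalf : γ ≤ 1/2 := min_le_left _ _
    set l : ℝ := 1 - γ with hldef
    have hl0 : 0 ≤ l := by rw [hldef]; linarith
    have hl1 : l < 1 := by rw [hldef]; linarith
    set S : X → X := fun x => l • T x with hSdef
    have hFS : FirmlyNonexpansive S := fne_smul hFT hl0 hl1.le
    have hcontr : ∀ x y : X, ‖S x - S y‖ ≤ l * ‖x - y‖ := by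
      intro x y
      have e : S x - S y = l • (T x - T y) := by rw [hSdef]; module
      rw [e, norm_smul, Real.norm_eq_abs, abs_of_nonneg hl0]
      exact mul_le_mul_of_nonneg_left (fne_nonexp hFT x y) hl0
    obtain ⟨z, hz⟩ := exists_fixedPt hl0 hl1 hcontr
    set θ : ℝ := 1 / (2 * ((q : ℝ) + 1)) with hθdef
    have hθ0 : 0 ≤ θ := by positivity
    have hθlt : θ < 1 / ((q : ℝ) + 1) := by
      rw [hθdef]
      apply one_div_lt_one_div_of_lt (by positivity)
      have : (0:ℝ) < (q : ℝ) + 1 := by positivity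
      linarith
    set D : ℝ := 2 * ‖z‖ + (q : ℝ) + 2 with hDdef
    have hD0 : 0 < D := by positivity
    obtain ⟨N₀, hN₀⟩ := exists_pow_lt_of_lt_one (show (0:ℝ) < θ / D by positivity) hl1
    set N : ℕ := max N₀ 1 with hNdef
    have hN : 1 ≤ N := le_max_right _ _
    refine ⟨S, ⟨hFS, z, N, θ, hN, hθ0, hθlt, ?_⟩, ?_⟩
    · intro n hNn _ x hx
      have hfix : S^[n] z = z := Function.iterate_fixed hz n
      have h1 : ‖S^[n] x - z‖ ≤ l ^ n * ‖x - z‖ := by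
        have := contraction_iter hl0 hcontr n x z
        rwa [hfix] at this
      have h2 : ‖x - z‖ ≤ D := by
        calc ‖x - z‖ ≤ ‖x‖ + ‖z‖ := norm_sub_le _ _
          _ ≤ (‖z‖ + (q : ℝ) + 1) + ‖z‖ := by linarith
          _ ≤ D := by rw [hDdef]; linarith
      have h3 : l ^ n ≤ l ^ N₀ := by
        apply pow_le_pow_of_le_one hl0 hl1.le
        calc N₀ ≤ N := le_max_left _ _
          _ ≤ n := hNn
      have h4 : l ^ n * ‖x - z‖ ≤ (θ / D) * D := by
        apply mul_le_mul (h3.trans hN₀.le) h2 (norm_nonneg _) (by positivity)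
      rw [div_mul_cancel₀ _ (ne_of_gt hD0)] at h4
      linarith
    · have hpt : ∀ x : X, ‖S x - T x‖ ≤ γ * (‖x‖ + c) := by
        intro x
        have e : S x - T x = (-γ) • T x := by rw [hSdef, hldef]; module
        rw [e, norm_smul, Real.norm_eq_abs, abs_neg, abs_of_nonneg hγ0.le]
        have : ‖T x‖ ≤ ‖x‖ + c := by
          calc ‖T x‖ ≤ ‖T x - T 0‖ + ‖T (0:X)‖ := by
                have := norm_add_le (T x - T 0) (T (0:X)); simpa using this
            _ ≤ ‖x - 0‖ + c := by rw [hcdef]; gcongr; exact fne_nonexp hFT x 0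
            _ = ‖x‖ + c := by rw [sub_zero]
        exact mul_le_mul_of_nonneg_left this hγ0.le
      have hbound := rhoHat_le_of_pointwise hFS hFT hγ0.le hc0 hpt
      have hγε : γ ≤ ε / (4 * (2 + c)) := min_le_right _ _
      have h2c : (0:ℝ) < 2 + c := by linarith
      have : 2 * γ * (2 + c) ≤ ε / 2 := by
        rw [le_div_iff₀ (by positivity)] at hγε ⊢
        · nlinarith
      linarith
  · -- intersection: super-regular
    intro T hTmem
    have hT : ∀ q : ℕ, T ∈ O q := fun q => Set.mem_iInter.1 hTmem q
    have hFT : FirmlyNonexpansive T := (hT 0).1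
    have hex : ∀ q : ℕ, ∃ (z : X) (N : ℕ) (θ : ℝ), 1 ≤ N ∧ 0 ≤ θ ∧
        θ < 1 / ((q : ℝ) + 1) ∧ ∀ n : ℕ, N ≤ n → n ≤ 2 * N →
          ∀ x : X, ‖x‖ ≤ ‖z‖ + (q : ℝ) + 1 → ‖T^[n] x - z‖ ≤ θ :=
      fun q => (hT q).2
    choose z N θ hN hθ0 hθlt hwin using hex
    have key : ∀ q : ℕ, ∀ n : ℕ, N q ≤ n →
        ∀ x : X, ‖x‖ ≤ ‖z q‖ + (q : ℝ) + 1 → ‖T^[n] x - z q‖ ≤ θ q := by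
      intro q
      apply improve (fne_nonexp hFT) _ _ (hN q) (hwin q)
      · have h1 : 1 / ((q : ℝ) + 1) ≤ 1 := by
          apply div_le_one_of_le₀ _ (by positivity)
          have : (0:ℝ) ≤ (q : ℝ) := Nat.cast_nonneg q
          linarith
        linarith [hθlt q]
      · have : (0:ℝ) ≤ (q : ℝ) := Nat.cast_nonneg q
        linarith
    have hzero : ∀ q : ℕ, ‖(0 : X)‖ ≤ ‖z q‖ + (q : ℝ) + 1 := by
      intro q
      simp only [norm_zero]
      positivity
    have hdist : ∀ p q : ℕ, dist (z p) (z q) ≤ 1 / ((p : ℝ) + 1) + 1 / ((q : ℝ) + 1) := by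
      intro p q
      set n : ℕ := max (N p) (N q) with hndef
      have h1 : ‖T^[n] (0:X) - z p‖ ≤ θ p := key p n (le_max_left _ _) 0 (hzero p)
      have h2 : ‖T^[n] (0:X) - z q‖ ≤ θ q := key q n (le_max_right _ _) 0 (hzero q)
      rw [dist_eq_norm]
      calc ‖z p - z q‖ ≤ ‖z p - T^[n] (0:X)‖ + ‖T^[n] (0:X) - z q‖ := by
            have e : z p - z q = (z p - T^[n] (0:X)) + (T^[n] (0:X) - z q) := by abel
            rw [e]; exact norm_add_le _ _
        _ = ‖T^[n] (0:X) - z p‖ + ‖T^[n] (0:X) - z q‖ := by rw [norm_sub_rev]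
        _ ≤ θ p + θ q := by linarith
        _ ≤ 1 / ((p : ℝ) + 1) + 1 / ((q : ℝ) + 1) := by
            linarith [hθlt p, hθlt q]
    have hcauchy : CauchySeq z := by
      rw [Metric.cauchySeq_iff']
      intro ε hε
      obtain ⟨K, hK⟩ := exists_nat_gt (2 / ε)
      refine ⟨K, ?_⟩
      intro n hn
      have h1 : 1 / ((n : ℝ) + 1) ≤ 1 / ((K : ℝ) + 1) := by
        apply one_div_le_one_div_of_le (by positivity)
        have : (K : ℝ) ≤ (n : ℝ) := Nat.cast_le.mpr hn
        linarith
      have h2 : 2 / ((K : ℝ) + 1) < ε := by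
        have h := (div_lt_iff₀ hε).mp hK
        rw [div_lt_iff₀ (show (0:ℝ) < (K : ℝ) + 1 by positivity)]
        nlinarith [Nat.cast_nonneg (α := ℝ) K]
      calc dist (z n) (z K) ≤ 1 / ((n : ℝ) + 1) + 1 / ((K : ℝ) + 1) := hdist n K
        _ ≤ 2 / ((K : ℝ) + 1) := by
            have e : (2:ℝ) / ((K : ℝ) + 1) = 1 / ((K : ℝ) + 1) + 1 / ((K : ℝ) + 1) := by ring
            rw [e]; linarith
        _ < ε := h2
    obtain ⟨xT, hxT⟩ := cauchySeq_tendsto_of_complete hcauchy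
    have hlim : ∀ q : ℕ, dist (z q) xT ≤ 1 / ((q : ℝ) + 1) := by
      intro q
      have h1 : Tendsto (fun p : ℕ => dist (z q) (z p)) atTop (𝓝 (dist (z q) xT)) :=
        tendsto_const_nhds.dist hxT
      have h2 : Tendsto (fun p : ℕ => 1 / ((q : ℝ) + 1) + 1 / ((p : ℝ) + 1)) atTop
          (𝓝 (1 / ((q : ℝ) + 1) + 0)) :=
        tendsto_const_nhds.add tendsto_one_div_add_atTop_nhds_zero_nat
      have h3 := le_of_tendsto_of_tendsto' h1 h2 (fun p => hdist q p)
      simpa using h3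
    refine ⟨xT, ?_⟩
    intro s hs ε hε
    obtain ⟨q, hq⟩ := exists_nat_gt (max s (2 / ε))
    have hsq : s < (q : ℝ) := lt_of_le_of_lt (le_max_left _ _) hq
    have hεq : 2 / ε < (q : ℝ) := lt_of_le_of_lt (le_max_right _ _) hq
    refine ⟨N q, ?_⟩
    intro n hn x hx
    have hxball : ‖x‖ ≤ ‖z q‖ + (q : ℝ) + 1 := by
      have := norm_nonneg (z q)
      linarith
    have h1 : ‖T^[n] x - z q‖ ≤ θ q := key q n hn x hxball
    have h2 : ‖z q - xT‖ ≤ 1 / ((q : ℝ) + 1) := by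
      rw [← dist_eq_norm]
      exact hlim q
    have h3 : 2 / ((q : ℝ) + 1) < ε := by
      have h := (div_lt_iff₀ hε).mp hεq
      rw [div_lt_iff₀ (show (0:ℝ) < (q : ℝ) + 1 by positivity)]
      nlinarith [Nat.cast_nonneg (α := ℝ) q]
    calc ‖T^[n] x - xT‖ ≤ ‖T^[n] x - z q‖ + ‖z q - xT‖ := by
          have e : T^[n] x - xT = (T^[n] x - z q) + (z q - xT) := by abel
          rw [e]; exact norm_add_le _ _
      _ ≤ θ q + 1 / ((q : ℝ) + 1) := by linarith
      _ < 1 / ((q : ℝ) + 1) + 1 / ((q : ℝ) + 1) := by linarith [hθlt q]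
      _ = 2 / ((q : ℝ) + 1) := by ring
      _ < ε := h3
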